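/- Let 1 < α < 2 and let ν be a Lévy measure on ℝ^d with ∫_{|x|>1} |x|^α ν(dx) < ∞ and ∫_{|x|≤1}|x|³ν(dx) < ∞. Define ν̃(B) = ∫_0^1 ν(s^{-1}B) s^{-α-1} ds. Then ∫_{ℝ^d} |x|³/(1+|x|²) ν̃(dx) < ∞; in particular ∫_{|x|>1} |x| ν̃(dx) < ∞. -/

import Mathlib

open MeasureTheory Set
open scoped ENNReal Pointwise

lemma lint_rpow_Ioo (q : ℝ) (hq : -1 < q) (b : ℝ) (hb : 0 < b) :
    ∫⁻ s in Set.Ioo (0:ℝ) b, ENNReal.ofReal (s ^ q) = ENNReal.ofReal (b ^ (q+1) / (q+1)) := by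
  have hint : IntegrableOn (fun s : ℝ => s ^ q) (Set.Ioo 0 b) := by
    have := (intervalIntegral.intervalIntegrable_rpow' (a := 0) (b := b) hq)
    rw [intervalIntegrable_iff_integrableOn_Ioc_of_le hb.le] at this
    exact this.mono_set Set.Ioo_subset_Ioc_self
  rw [← ofReal_integral_eq_lintegral_ofReal hint]
  · congr 1
    rw [← integral_Ioc_eq_integral_Ioo, ← intervalIntegral.integral_of_le hb.le,
      integral_rpow (Or.inl hq)]
    rw [Real.zero_rpow (by linarith)]
    ring
  · filter_upwards [self_mem_ae_restrict measurableSet_Ioo] with s hs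
    exact Real.rpow_nonneg hs.1.le _

lemma lint_rpow_Ico (q : ℝ) (hq : q ≠ -1) (c : ℝ) (hc : 0 < c) (hc1 : c ≤ 1) :
    ∫⁻ s in Set.Ico c 1, ENNReal.ofReal (s ^ q) = ENNReal.ofReal ((1 - c ^ (q+1)) / (q+1)) := by
  have h0 : (0:ℝ) ∉ Set.uIcc c 1 := by
    rw [Set.uIcc_of_le hc1]
    intro h
    exact absurd h.1 (by linarith)
  have hint : IntegrableOn (fun s : ℝ => s ^ q) (Set.Ico c 1) := by
    have := (intervalIntegral.intervalIntegrable_rpow (μ := volume) (a := c) (b := 1) (r := q) (Or.inr h0))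
    rw [intervalIntegrable_iff_integrableOn_Ioc_of_le hc1] at this
    exact this.congr_set_ae Ico_ae_eq_Ioc
  rw [← ofReal_integral_eq_lintegral_ofReal hint]
  · congr 1
    rw [setIntegral_congr_set Ico_ae_eq_Ioc, ← intervalIntegral.integral_of_le hc1,
      integral_rpow (Or.inr ⟨hq, h0⟩)]
    rw [Real.one_rpow]
  · filter_upwards [self_mem_ae_restrict measurableSet_Ico] with s hs
    exact Real.rpow_nonneg (le_trans hc.le hs.1) _

lemma meas_rpow_ofReal (q : ℝ) : Measurable fun s : ℝ => ENNReal.ofReal (s ^ q) :=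
  (measurable_of_continuousOn_compl_singleton 0
    (ContinuousOn.rpow_const continuousOn_id fun x hx => Or.inl hx)).ennreal_ofReal

lemma sigmaFinite_levy {d : ℕ} (ν : Measure (Fin d → ℝ)) (hν0 : ν {0} = 0)
    (hν : ∫⁻ x, ENNReal.ofReal (min (‖x‖ ^ 2) 1) ∂ν ≠ ⊤) : SigmaFinite ν := by
  refine ⟨⟨⟨fun n => {x | ((n:ℝ)+1)⁻¹ < ‖x‖} ∪ {0}, fun _ => trivial, fun n => ?_, ?_⟩⟩⟩
  · set c : ℝ := ((n:ℝ)+1)⁻¹ with hc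
    have hc0 : 0 < c := by positivity
    have hc1 : c ≤ 1 := by
      rw [hc, inv_le_one_iff₀]
      right
      linarith [Nat.cast_nonneg (α := ℝ) n]
    have key : ENNReal.ofReal (c^2) * ν {x | c < ‖x‖} ≤
        ∫⁻ x, ENNReal.ofReal (min (‖x‖ ^ 2) 1) ∂ν := by
      calc ENNReal.ofReal (c^2) * ν {x | c < ‖x‖}
          = ∫⁻ _ in {x : Fin d → ℝ | c < ‖x‖}, ENNReal.ofReal (c^2) ∂ν := by
            rw [setLIntegral_const]
        _ ≤ ∫⁻ x in {x : Fin d → ℝ | c < ‖x‖}, ENNReal.ofReal (min (‖x‖ ^ 2) 1) ∂ν := by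
            refine setLIntegral_mono
              (((continuous_norm.pow 2).min continuous_const).measurable.ennreal_ofReal) ?_
            intro x hx
            refine ENNReal.ofReal_le_ofReal (le_min ?_ ?_)
            · have : c ≤ ‖x‖ := le_of_lt hx
              nlinarith
            · nlinarith
        _ ≤ ∫⁻ x, ENNReal.ofReal (min (‖x‖ ^ 2) 1) ∂ν := setLIntegral_le_lintegral _ _
    have hfin : ν {x | c < ‖x‖} < ⊤ := by
      by_contra h
      rw [not_lt, top_le_iff] at h
      rw [h, ENNReal.mul_top (by simp [ENNReal.ofReal_eq_zero]; nlinarith)] at key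
      exact hν (top_le_iff.mp key)
    calc ν ({x | c < ‖x‖} ∪ {0}) ≤ ν {x | c < ‖x‖} + ν {0} := measure_union_le _ _
      _ < ⊤ := by rw [hν0]; simpa using hfin
  · rw [Set.eq_univ_iff_forall]
    intro x
    by_cases hx : x = 0
    · exact Set.mem_iUnion.mpr ⟨0, Or.inr hx⟩
    · have hn : 0 < ‖x‖ := norm_pos_iff.mpr hx
      obtain ⟨n, hn'⟩ := exists_nat_one_div_lt hn
      exact Set.mem_iUnion.mpr ⟨n, Or.inl (by rwa [Set.mem_setOf_eq, ← one_div])⟩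

/-- For 1 < α < 2 and a Lévy measure ν with ∫_{|x|>1}|x|^α ν(dx) < ∞ and
∫_{|x|≤1}|x|³ν(dx) < ∞, the measure ν̃(B) = ∫_0^1 ν(s⁻¹B) s^{-α-1} ds satisfies
∫ |x|³/(1+|x|²) ν̃(dx) < ∞; in particular ∫_{|x|>1}|x| ν̃(dx) < ∞. -/
theorem stmt_13 {d : ℕ} (α : ℝ) (hα1 : 1 < α) (hα2 : α < 2)
    (ν : Measure (Fin d → ℝ)) (hν0 : ν {0} = 0)
    (hν : ∫⁻ x, ENNReal.ofReal (min (‖x‖ ^ 2) 1) ∂ν ≠ ⊤)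
    (hνα : ∫⁻ x in {x : Fin d → ℝ | 1 < ‖x‖}, ENNReal.ofReal (‖x‖ ^ α) ∂ν ≠ ⊤)
    (hν3 : ∫⁻ x in {x : Fin d → ℝ | ‖x‖ ≤ 1}, ENNReal.ofReal (‖x‖ ^ 3) ∂ν ≠ ⊤)
    (νt : Measure (Fin d → ℝ))
    (hνt : ∀ B : Set (Fin d → ℝ), MeasurableSet B →
      νt B = ∫⁻ s in Set.Ioo (0:ℝ) 1, ν (s⁻¹ • B) * ENNReal.ofReal (s ^ (-α - 1 : ℝ))) :
    (∫⁻ x, ENNReal.ofReal (‖x‖ ^ 3 / (1 + ‖x‖ ^ 2)) ∂νt ≠ ⊤) ∧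
    (∫⁻ x in {x : Fin d → ℝ | 1 < ‖x‖}, ENNReal.ofReal ‖x‖ ∂νt ≠ ⊤) := by
  haveI : SigmaFinite ν := sigmaFinite_levy ν hν0 hν
  set G : (Fin d → ℝ) → ℝ≥0∞ := fun x => ENNReal.ofReal (‖x‖ ^ 3 / (1 + ‖x‖ ^ 2)) with hGdef
  have hGmeas : Measurable G :=
    (((continuous_norm.pow 3).div (continuous_const.add (continuous_norm.pow 2))
      (fun x => (by positivity : (1:ℝ) + ‖x‖ ^ 2 ≠ 0))).measurable).ennreal_ofReal
  have hρ : Measurable fun s : ℝ => ENNReal.ofReal (s ^ (-α - 1 : ℝ)) := meas_rpow_ofReal _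
  have hT : Measurable fun p : ℝ × (Fin d → ℝ) => p.1 • p.2 :=
    (continuous_fst.smul continuous_snd).measurable
  set μ₁ : Measure ℝ :=
    (volume.restrict (Set.Ioo (0:ℝ) 1)).withDensity fun s => ENNReal.ofReal (s ^ (-α - 1 : ℝ))
    with hμ₁
  -- identification of νt
  have hmap : νt = Measure.map (fun p : ℝ × (Fin d → ℝ) => p.1 • p.2) (μ₁.prod ν) := by
    ext B hB
    rw [hνt B hB, Measure.map_apply hT hB, Measure.prod_apply (hT hB), hμ₁,
      lintegral_withDensity_eq_lintegral_mul _ hρ (measurable_measure_prodMk_left (hT hB))]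
    refine setLIntegral_congr_fun measurableSet_Ioo ?_
    intro s hs
    have hs0 : s ≠ 0 := ne_of_gt hs.1
    have hpre : Prod.mk s ⁻¹' ((fun p : ℝ × (Fin d → ℝ) => p.1 • p.2) ⁻¹' B)
        = (fun x : Fin d → ℝ => s • x) ⁻¹' B := rfl
    simp only [Pi.mul_apply, hpre, Set.preimage_smul₀ hs0]
    rw [mul_comm]
  -- the key iterated-integral formula
  have key : ∫⁻ x, G x ∂νt
      = ∫⁻ x, (∫⁻ s in Set.Ioo (0:ℝ) 1,
          ENNReal.ofReal (s ^ (-α - 1 : ℝ)) * G (s • x)) ∂ν := by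
    rw [hmap, lintegral_map hGmeas hT]
    rw [show (fun a : ℝ × (Fin d → ℝ) => G (a.1 • a.2))
      = fun p : ℝ × (Fin d → ℝ) => G (p.1 • p.2) from rfl,
      lintegral_prod_symm (fun p : ℝ × (Fin d → ℝ) => G (p.1 • p.2))
        ((hGmeas.comp hT).aemeasurable)]
    refine lintegral_congr fun x => ?_
    rw [hμ₁, lintegral_withDensity_eq_lintegral_mul _ hρ
      (show Measurable fun s : ℝ => G (s • x) by
        exact hGmeas.comp ((continuous_id.smul continuous_const).measurable))]
    rfl
  -- notation for the inner integral
  set J : (Fin d → ℝ) → ℝ≥0∞ := fun x =>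
    ∫⁻ s in Set.Ioo (0:ℝ) 1, ENNReal.ofReal (s ^ (-α - 1 : ℝ)) * G (s • x) with hJdef
  -- pointwise bounds
  have hsm : ∀ (x : Fin d → ℝ) {s : ℝ}, 0 < s →
      G (s • x) = ENNReal.ofReal ((s * ‖x‖) ^ 3 / (1 + (s * ‖x‖) ^ 2)) := by
    intro x s hs
    simp only [hGdef]
    rw [norm_smul, Real.norm_eq_abs, abs_of_pos hs]
  have hptw1 : ∀ (x : Fin d → ℝ) (s : ℝ), 0 < s →
      ENNReal.ofReal (s ^ (-α - 1 : ℝ)) * G (s • x)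
        ≤ ENNReal.ofReal (‖x‖ ^ 3) * ENNReal.ofReal (s ^ (2 - α : ℝ)) := by
    intro x s hs0
    rw [hsm x hs0, ← ENNReal.ofReal_mul (Real.rpow_nonneg hs0.le _),
      ← ENNReal.ofReal_mul (by positivity)]
    apply ENNReal.ofReal_le_ofReal
    have e1 : s ^ (-α - 1 : ℝ) * s ^ (3:ℕ) = s ^ (2 - α : ℝ) := by
      rw [← Real.rpow_natCast s 3, ← Real.rpow_add hs0]
      congr 1
      push_cast
      ring
    calc s ^ (-α - 1 : ℝ) * ((s * ‖x‖) ^ 3 / (1 + (s * ‖x‖) ^ 2))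
        ≤ s ^ (-α - 1 : ℝ) * (s * ‖x‖) ^ 3 :=
          mul_le_mul_of_nonneg_left
            (div_le_self (by positivity) (le_add_of_nonneg_right (sq_nonneg _)))
            (Real.rpow_nonneg hs0.le _)
      _ = ‖x‖ ^ 3 * s ^ (2 - α : ℝ) := by
          rw [mul_pow, show s ^ (-α - 1 : ℝ) * (s ^ 3 * ‖x‖ ^ 3)
            = s ^ (-α - 1 : ℝ) * s ^ (3:ℕ) * ‖x‖ ^ 3 by ring, e1]
          ring
  have hptw2 : ∀ (x : Fin d → ℝ) (s : ℝ), 0 < s →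
      ENNReal.ofReal (s ^ (-α - 1 : ℝ)) * G (s • x)
        ≤ ENNReal.ofReal ‖x‖ * ENNReal.ofReal (s ^ (-α : ℝ)) := by
    intro x s hs0
    rw [hsm x hs0, ← ENNReal.ofReal_mul (Real.rpow_nonneg hs0.le _),
      ← ENNReal.ofReal_mul (norm_nonneg x)]
    apply ENNReal.ofReal_le_ofReal
    have e2 : s ^ (-α - 1 : ℝ) * s = s ^ (-α : ℝ) := by
      nth_rewrite 2 [← Real.rpow_one s]
      rw [← Real.rpow_add hs0]
      congr 1
      ring
    have hb : (s * ‖x‖) ^ 3 / (1 + (s * ‖x‖) ^ 2) ≤ s * ‖x‖ := by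
      rw [div_le_iff₀ (by positivity)]
      nlinarith [mul_nonneg hs0.le (norm_nonneg x), sq_nonneg (s * ‖x‖)]
    calc s ^ (-α - 1 : ℝ) * ((s * ‖x‖) ^ 3 / (1 + (s * ‖x‖) ^ 2))
        ≤ s ^ (-α - 1 : ℝ) * (s * ‖x‖) :=
          mul_le_mul_of_nonneg_left hb (Real.rpow_nonneg hs0.le _)
      _ = ‖x‖ * s ^ (-α : ℝ) := by
          rw [show s ^ (-α - 1 : ℝ) * (s * ‖x‖) = s ^ (-α - 1 : ℝ) * s * ‖x‖ by ring, e2]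
          ring
  set C : ℝ≥0∞ := ENNReal.ofReal (1/(3-α)) + ENNReal.ofReal (1/(α-1)) with hCdef
  have hCfin : C ≠ ⊤ := ENNReal.add_ne_top.mpr ⟨ENNReal.ofReal_ne_top, ENNReal.ofReal_ne_top⟩
  -- bound 1 : valid for all x
  have hb1 : ∀ x : Fin d → ℝ, J x ≤ ENNReal.ofReal (‖x‖ ^ 3) * C := by
    intro x
    calc J x ≤ ∫⁻ s in Set.Ioo (0:ℝ) 1,
          ENNReal.ofReal (‖x‖ ^ 3) * ENNReal.ofReal (s ^ (2 - α : ℝ)) :=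
        setLIntegral_mono' measurableSet_Ioo (fun s hs => hptw1 x s hs.1)
      _ = ENNReal.ofReal (‖x‖ ^ 3) * ∫⁻ s in Set.Ioo (0:ℝ) 1,
          ENNReal.ofReal (s ^ (2 - α : ℝ)) :=
        lintegral_const_mul' _ _ ENNReal.ofReal_ne_top
      _ = ENNReal.ofReal (‖x‖ ^ 3) * ENNReal.ofReal (1/(3-α)) := by
        rw [lint_rpow_Ioo (2-α) (by linarith) 1 one_pos, Real.one_rpow]
        norm_num
        rw [show (2 - α + 1 : ℝ) = 3 - α by ring]
      _ ≤ ENNReal.ofReal (‖x‖ ^ 3) * C :=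
        mul_le_mul_right (le_add_right le_rfl) _
  -- bound 2 : for ‖x‖ > 1
  have hb2 : ∀ x : Fin d → ℝ, 1 < ‖x‖ → J x ≤ ENNReal.ofReal (‖x‖ ^ α) * C := by
    intro x hx
    have hr0 : (0:ℝ) < ‖x‖ := lt_trans one_pos hx
    have hinv0 : (0:ℝ) < ‖x‖⁻¹ := by positivity
    have hinv1 : ‖x‖⁻¹ < 1 := by
      rw [inv_lt_one_iff₀]; right; exact hx
    have hsplit : Set.Ioo (0:ℝ) 1 = Set.Ioo 0 ‖x‖⁻¹ ∪ Set.Ico ‖x‖⁻¹ 1 :=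
      (Set.Ioo_union_Ico_eq_Ioo hinv0 hinv1.le).symm
    have hdisj : Disjoint (Set.Ioo (0:ℝ) ‖x‖⁻¹) (Set.Ico ‖x‖⁻¹ 1) := by
      refine Set.disjoint_left.mpr ?_
      rintro s ⟨_, h2⟩ ⟨h3, _⟩
      exact absurd h2 (not_lt.mpr h3)
    have piece1 : ∫⁻ s in Set.Ioo (0:ℝ) ‖x‖⁻¹,
        ENNReal.ofReal (s ^ (-α - 1 : ℝ)) * G (s • x)
        ≤ ENNReal.ofReal (‖x‖ ^ α) * ENNReal.ofReal (1/(3-α)) := by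
      calc ∫⁻ s in Set.Ioo (0:ℝ) ‖x‖⁻¹, ENNReal.ofReal (s ^ (-α - 1 : ℝ)) * G (s • x)
          ≤ ∫⁻ s in Set.Ioo (0:ℝ) ‖x‖⁻¹,
            ENNReal.ofReal (‖x‖ ^ 3) * ENNReal.ofReal (s ^ (2 - α : ℝ)) :=
          setLIntegral_mono' measurableSet_Ioo (fun s hs => hptw1 x s hs.1)
        _ = ENNReal.ofReal (‖x‖ ^ 3) * ∫⁻ s in Set.Ioo (0:ℝ) ‖x‖⁻¹,
            ENNReal.ofReal (s ^ (2 - α : ℝ)) :=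
          lintegral_const_mul' _ _ ENNReal.ofReal_ne_top
        _ = ENNReal.ofReal (‖x‖ ^ 3) * ENNReal.ofReal ((‖x‖⁻¹) ^ (3 - α : ℝ) / (3-α)) := by
          rw [lint_rpow_Ioo (2-α) (by linarith) _ hinv0,
            show (2 - α + 1 : ℝ) = 3 - α by ring]
        _ = ENNReal.ofReal (‖x‖ ^ α) * ENNReal.ofReal (1/(3-α)) := by
          rw [← ENNReal.ofReal_mul (by positivity), ← ENNReal.ofReal_mul (by positivity)]
          congr 1
          rw [Real.inv_rpow hr0.le, ← Real.rpow_neg hr0.le, ← Real.rpow_natCast ‖x‖ 3,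
            show ‖x‖ ^ ((3:ℕ):ℝ) * (‖x‖ ^ (-(3-α):ℝ) / (3-α))
              = ‖x‖ ^ ((3:ℕ):ℝ) * ‖x‖ ^ (-(3-α):ℝ) * (1/(3-α)) by ring,
            ← Real.rpow_add hr0,
            show ((3:ℕ):ℝ) + -(3-α) = α by push_cast; ring]
    have piece2 : ∫⁻ s in Set.Ico (‖x‖⁻¹) 1,
        ENNReal.ofReal (s ^ (-α - 1 : ℝ)) * G (s • x)
        ≤ ENNReal.ofReal (‖x‖ ^ α) * ENNReal.ofReal (1/(α-1)) := by
      calc ∫⁻ s in Set.Ico (‖x‖⁻¹) 1, ENNReal.ofReal (s ^ (-α - 1 : ℝ)) * G (s • x)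
          ≤ ∫⁻ s in Set.Ico (‖x‖⁻¹) 1,
            ENNReal.ofReal ‖x‖ * ENNReal.ofReal (s ^ (-α : ℝ)) :=
          setLIntegral_mono' measurableSet_Ico
            (fun s hs => hptw2 x s (lt_of_lt_of_le hinv0 hs.1))
        _ = ENNReal.ofReal ‖x‖ * ∫⁻ s in Set.Ico (‖x‖⁻¹) 1,
            ENNReal.ofReal (s ^ (-α : ℝ)) :=
          lintegral_const_mul' _ _ ENNReal.ofReal_ne_top
        _ = ENNReal.ofReal ‖x‖ * ENNReal.ofReal ((1 - (‖x‖⁻¹) ^ (-α+1:ℝ))/(-α+1)) := by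
          rw [lint_rpow_Ico (-α) (by intro h; apply absurd hα1; rw [show α = 1 by linarith [neg_injective h]]; simp) _ hinv0 hinv1.le]
        _ ≤ ENNReal.ofReal ‖x‖ * ENNReal.ofReal (‖x‖ ^ (α-1:ℝ) / (α-1)) := by
          apply mul_le_mul_right
          apply ENNReal.ofReal_le_ofReal
          have ht : (‖x‖⁻¹) ^ (-α+1:ℝ) = ‖x‖ ^ (α-1:ℝ) := by
            rw [Real.inv_rpow hr0.le, ← Real.rpow_neg hr0.le]
            congr 1
            ring
          rw [ht, show ((1 - ‖x‖ ^ (α-1:ℝ))/(-α+1) : ℝ)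
            = (‖x‖ ^ (α-1:ℝ) - 1)/(α-1) by rw [show (-α+1:ℝ) = -(α-1) by ring,
              show ((1 - ‖x‖ ^ (α-1:ℝ)) : ℝ) = -(‖x‖ ^ (α-1:ℝ) - 1) by ring, neg_div_neg_eq]]
          gcongr
          · linarith
        _ = ENNReal.ofReal (‖x‖ ^ α) * ENNReal.ofReal (1/(α-1)) := by
          rw [← ENNReal.ofReal_mul (norm_nonneg x), ← ENNReal.ofReal_mul (by positivity)]
          congr 1
          nth_rewrite 1 [← Real.rpow_one ‖x‖]
          rw [show (‖x‖ ^ (1:ℝ) * (‖x‖ ^ (α-1:ℝ) / (α-1)) : ℝ)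
              = ‖x‖ ^ (1:ℝ) * ‖x‖ ^ (α-1:ℝ) * (1/(α-1)) by ring,
            ← Real.rpow_add hr0, show (1:ℝ) + (α-1) = α by ring]
    calc J x = (∫⁻ s in Set.Ioo (0:ℝ) ‖x‖⁻¹, ENNReal.ofReal (s ^ (-α - 1 : ℝ)) * G (s • x))
          + ∫⁻ s in Set.Ico (‖x‖⁻¹) 1, ENNReal.ofReal (s ^ (-α - 1 : ℝ)) * G (s • x) := by
          rw [hJdef]
          simp only
          rw [hsplit, lintegral_union measurableSet_Ico hdisj]
      _ ≤ ENNReal.ofReal (‖x‖ ^ α) * ENNReal.ofReal (1/(3-α))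
          + ENNReal.ofReal (‖x‖ ^ α) * ENNReal.ofReal (1/(α-1)) := add_le_add piece1 piece2
      _ = ENNReal.ofReal (‖x‖ ^ α) * C := by rw [hCdef, mul_add]
  -- assembling
  have hSle : MeasurableSet {x : Fin d → ℝ | ‖x‖ ≤ 1} :=
    measurableSet_le measurable_norm measurable_const
  have hSlt : MeasurableSet {x : Fin d → ℝ | 1 < ‖x‖} :=
    measurableSet_lt measurable_const measurable_norm
  have hcompl : {x : Fin d → ℝ | ‖x‖ ≤ 1}ᶜ = {x : Fin d → ℝ | 1 < ‖x‖} := by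
    ext x
    simp [not_le]
  have main : ∫⁻ x, J x ∂ν ≠ ⊤ := by
    rw [← lintegral_add_compl (fun x => J x) hSle]
    refine ENNReal.add_ne_top.mpr ⟨?_, ?_⟩
    · have h1 : ∫⁻ x in {x : Fin d → ℝ | ‖x‖ ≤ 1}, J x ∂ν
          ≤ (∫⁻ x in {x : Fin d → ℝ | ‖x‖ ≤ 1}, ENNReal.ofReal (‖x‖ ^ 3) ∂ν) * C := by
        rw [← lintegral_mul_const' C _ hCfin]
        exact setLIntegral_mono' hSle (fun x _ => hb1 x)
      exact ne_top_of_le_ne_top (ENNReal.mul_ne_top hν3 hCfin) h1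
    · have h2 : ∫⁻ x in {x : Fin d → ℝ | ‖x‖ ≤ 1}ᶜ, J x ∂ν
          ≤ (∫⁻ x in {x : Fin d → ℝ | 1 < ‖x‖}, ENNReal.ofReal (‖x‖ ^ α) ∂ν) * C := by
        rw [hcompl, ← lintegral_mul_const' C _ hCfin]
        exact setLIntegral_mono' hSlt (fun x hx => hb2 x hx)
      exact ne_top_of_le_ne_top (ENNReal.mul_ne_top hνα hCfin) h2
  have conc1 : ∫⁻ x, G x ∂νt ≠ ⊤ := by
    rw [key]
    exact main
  refine ⟨conc1, ?_⟩
  have hle2 : ∫⁻ x in {x : Fin d → ℝ | 1 < ‖x‖}, ENNReal.ofReal ‖x‖ ∂νt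
      ≤ 2 * ∫⁻ x, G x ∂νt := by
    calc ∫⁻ x in {x : Fin d → ℝ | 1 < ‖x‖}, ENNReal.ofReal ‖x‖ ∂νt
        ≤ ∫⁻ x in {x : Fin d → ℝ | 1 < ‖x‖}, 2 * G x ∂νt := by
          refine setLIntegral_mono' hSlt (fun x hx => ?_)
          have hx1 : (1:ℝ) < ‖x‖ := hx
          rw [hGdef]
          simp only
          rw [show (2:ℝ≥0∞) = ENNReal.ofReal 2 by norm_num,
            ← ENNReal.ofReal_mul (by norm_num)]
          apply ENNReal.ofReal_le_ofReal
          rw [← mul_div_assoc, le_div_iff₀ (by positivity)]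
          nlinarith [mul_nonneg (mul_nonneg (by linarith : (0:ℝ) ≤ ‖x‖)
            (by linarith : (0:ℝ) ≤ ‖x‖ - 1)) (by linarith : (0:ℝ) ≤ ‖x‖ + 1)]
      _ ≤ ∫⁻ x, 2 * G x ∂νt := setLIntegral_le_lintegral _ _
      _ = 2 * ∫⁻ x, G x ∂νt := lintegral_const_mul' 2 G ENNReal.ofNat_ne_top
  exact ne_top_of_le_ne_top (ENNReal.mul_ne_top ENNReal.ofNat_ne_top conc1) hle2
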